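/- Let V be a nonempty finite type and K ⊆ V nonempty. A function f : Set V → Set V satisfies Tautology, Success, Inclusion, Consistency, Disjunctive Overlap and Disjunctive Rationality if and only if there exists an interval order r on V anchored on K such that f A = opt(A, r) for every A ⊆ V. (This is the representation theorem for interval-order-based (IOB) revision operators.) -/

import Mathlib

/-- The Ferrers condition: `r` is a biorder. -/
def Ferrers {V : Type*} (r : V → V → Prop) : Prop :=
  ∀ v u v' u', r v u → r v' u' → r v u' ∨ r v' u

/-- Optimal elements of `S` w.r.t. `r`. -/
def opt {V : Type*} (S : Set V) (r : V → V → Prop) : Set V :=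
  {v ∈ S | ∀ u ∈ S, r v u}

theorem IOB_representation
    (V : Type*) [Fintype V] [Nonempty V] (K : Set V) (hK : K.Nonempty)
    (f : Set V → Set V) :
    (f Set.univ = K ∧
     (∀ A, f A ⊆ A) ∧
     (∀ A, K ∩ A ⊆ f A) ∧
     (∀ A, A ≠ ∅ → f A ≠ ∅) ∧
     (∀ A B, f (A ∪ B) ⊆ f A ∪ f B) ∧
     (∀ A B, f A ⊆ f (A ∪ B) ∨ f B ⊆ f (A ∪ B))) ↔
    (∃ r : V → V → Prop, (∀ v, r v v) ∧ Ferrers r ∧ opt Set.univ r = K ∧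
      ∀ A, f A = opt A r) := by
  constructor
  · rintro ⟨hT, hS, hI, hC, hO, hR⟩
    -- Chernoff / α condition from Disjunctive Overlap + Success
    have alpha : ∀ A S : Set V, A ⊆ S → f S ∩ A ⊆ f A := by
      intro A S hAS v hv
      obtain ⟨hvS, hvA⟩ := hv
      have hU : A ∪ (S \ A) = S := Set.union_diff_cancel hAS
      have := hO A (S \ A)
      rw [hU] at this
      rcases this hvS with h | h
      · exact h
      · exact absurd hvA (hS _ h).2
    set r : V → V → Prop := fun v u => v ∈ f {v, u} with hr
    -- reflexivity
    have hrefl : ∀ v, r v v := by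
      intro v
      have h1 : f {v, v} ≠ ∅ := hC _ (by simp)
      obtain ⟨w, hw⟩ := Set.nonempty_iff_ne_empty.mpr h1
      have : w ∈ ({v, v} : Set V) := hS _ hw
      simp at this
      simpa [hr, this] using hw
    -- Ferrers
    have hF : Ferrers r := by
      intro v u v' u' h1 h2
      rcases hR {v, u} {v', u'} with h | h
      · left
        have hv : v ∈ f ({v, u} ∪ {v', u'}) := h h1
        exact alpha {v, u'} ({v, u} ∪ {v', u'})
          (by intro x hx; simp only [Set.mem_insert_iff, Set.mem_singleton_iff,
              Set.mem_union] at hx ⊢; tauto)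
          ⟨hv, by simp⟩
      · right
        have hv : v' ∈ f ({v, u} ∪ {v', u'}) := h h2
        exact alpha {v', u} ({v, u} ∪ {v', u'})
          (by intro x hx; simp only [Set.mem_insert_iff, Set.mem_singleton_iff,
              Set.mem_union] at hx ⊢; tauto)
          ⟨hv, by simp⟩
    -- main equality
    have hmain : ∀ A, f A = opt A r := by
      intro A
      ext v
      constructor
      · intro hv
        refine ⟨hS _ hv, fun u hu => ?_⟩
        have hsub : ({v, u} : Set V) ⊆ A := by
          intro x hx; rcases hx with hx | hx
          · exact hx ▸ hS _ hv
          · simp at hx; exact hx ▸ hu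
        exact alpha {v, u} A hsub ⟨hv, by simp⟩
      · rintro ⟨hvA, hopt⟩
        -- induction: v ∈ f (insert v S) for all S ⊆ A
        have key : ∀ S : Set V, S ⊆ A → v ∈ f (insert v S) := by
          intro S
          refine Set.Finite.induction_on (motive := fun S _ => S ⊆ A → v ∈ f (insert v S))
            S (Set.toFinite S) (fun _ => by have h := hrefl v; simp only [hr] at h; simpa using h) ?_
          intro a S ha hSfin IH hsub
          have hSA : S ⊆ A := fun x hx => hsub (Set.mem_insert_of_mem a hx)
          have h1 : v ∈ f (insert v S) := IH hSA
          have h2 : v ∈ f {v, a} := hopt a (hsub (Set.mem_insert a S))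
          have hunion : insert v S ∪ {v, a} = insert v (insert a S) := by
            ext x; simp [or_comm, or_left_comm, or_assoc]
          rcases hR (insert v S) {v, a} with h | h
          · have := h h1; rwa [hunion] at this
          · have := h h2; rwa [hunion] at this
        have := key A (subset_refl A)
        rwa [Set.insert_eq_of_mem hvA] at this
    refine ⟨r, hrefl, hF, ?_, hmain⟩
    rw [← hmain Set.univ, hT]
  · rintro ⟨r, hrefl, hF, hanch, hf⟩
    -- totality
    have htot : ∀ v u, r v u ∨ r u v := fun v u => hF v v u u (hrefl v) (hrefl u)
    -- every nonempty set has an optimal element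
    have hopt_ne : ∀ S : Set V, S.Nonempty → (opt S r).Nonempty := by
      intro S
      refine Set.Finite.induction_on (motive := fun S _ => S.Nonempty → (opt S r).Nonempty)
        S (Set.toFinite S) (fun h => absurd h (by simp)) ?_
      intro a S ha hSfin IH _
      rcases S.eq_empty_or_nonempty with hE | hNE
      · subst hE
        exact ⟨a, by simp, fun u hu => by simp at hu; exact hu ▸ hrefl a⟩
      · obtain ⟨v, hvS, hvopt⟩ := IH hNE
        by_cases hva : r v a
        · refine ⟨v, Set.mem_insert_of_mem a hvS, fun u hu => ?_⟩
          rcases hu with hu | hu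
          · exact hu ▸ hva
          · exact hvopt u hu
        · have hav : r a v := (htot v a).resolve_left hva
          refine ⟨a, Set.mem_insert a S, fun u hu => ?_⟩
          rcases hu with hu | hu
          · exact hu ▸ hrefl a
          · rcases hF a a v u (hrefl a) (hvopt u hu) with h | h
            · exact h
            · exact absurd h hva
    refine ⟨?_, ?_, ?_, ?_, ?_, ?_⟩
    · rw [hf, hanch]
    · intro A v hv; rw [hf] at hv; exact hv.1
    · intro A v hv
      rw [hf]
      obtain ⟨hvK, hvA⟩ := hv
      rw [← hanch] at hvK
      exact ⟨hvA, fun u _ => hvK.2 u (Set.mem_univ u)⟩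
    · intro A hA
      rw [hf]
      exact Set.nonempty_iff_ne_empty.mp (hopt_ne A (Set.nonempty_iff_ne_empty.mpr hA))
    · intro A B v hv
      rw [hf] at hv
      obtain ⟨hvAB, hvopt⟩ := hv
      rcases hvAB with hv | hv
      · left; rw [hf]; exact ⟨hv, fun u hu => hvopt u (Or.inl hu)⟩
      · right; rw [hf]; exact ⟨hv, fun u hu => hvopt u (Or.inr hu)⟩
    · intro A B
      by_contra h
      push_neg at h
      obtain ⟨h1, h2⟩ := h
      rw [Set.not_subset] at h1 h2
      obtain ⟨v, hvA, hvn⟩ := h1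
      obtain ⟨w, hwB, hwn⟩ := h2
      rw [hf] at hvA hvn
      rw [hf] at hwB hwn
      simp only [opt, Set.mem_setOf_eq, not_and, not_forall] at hvn hwn
      obtain ⟨b, hbAB, hvb⟩ := hvn (Or.inl hvA.1)
      obtain ⟨a, haAB, hwa⟩ := hwn (Or.inr hwB.1)
      have hb : b ∈ B := by
        rcases hbAB with h' | h'
        · exact absurd (hvA.2 b h') hvb
        · exact h'
      have ha : a ∈ A := by
        rcases haAB with h' | h'
        · exact h'
        · exact absurd (hwB.2 a h') hwa
      rcases hF v a w b (hvA.2 a ha) (hwB.2 b hb) with h' | h'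
      · exact hvb h'
      · exact hwa h'
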